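/- Let n ≥ 1, let a ∈ ℂ, and let f be a symmetric polynomial in the n variables x₁,…,xₙ over ℂ of total degree at most n such that substituting a for the last variable yields the zero polynomial, i.e. f(x₁,…,x_{n−1},a) = 0. Then there exists a constant c ∈ ℂ such that f = c · ∏_{j=1}^{n} (xⱼ − a). -/

import Mathlib

open MvPolynomial

noncomputable section

namespace SymmAux


variable {m : ℕ} (a : ℂ)

/-- The substitution sending variable `j` to the constant `a`. -/
def substA (j : Fin (m + 1)) :
    MvPolynomial (Fin (m + 1)) ℂ →ₐ[ℂ] MvPolynomial (Fin (m + 1)) ℂ :=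
  aeval (fun i => if i = j then C a else X i)

lemma substA_X (j i : Fin (m + 1)) :
    substA a j (X i) = if i = j then C a else X i := by
  simp [substA]

lemma dvd_sub_substA (j : Fin (m + 1)) (f : MvPolynomial (Fin (m + 1)) ℂ) :
    (X j - C a) ∣ f - substA a j f := by
  induction f using MvPolynomial.induction_on with
  | C c => simp [substA]
  | add p q hp hq =>
      have : p + q - substA a j (p + q) =
          (p - substA a j p) + (q - substA a j q) := by
        rw [map_add]; ring
      rw [this]; exact dvd_add hp hq
  | mul_X p i hp =>
      rcases eq_or_ne i j with rfl | hij
      · have hm : substA a i (p * X i) = substA a i p * C a := by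
          rw [map_mul, substA_X, if_pos rfl]
        have : p * X i - substA a i (p * X i) =
            (p - substA a i p) * X i + substA a i p * (X i - C a) := by
          rw [hm]; ring
        rw [this]
        exact dvd_add (hp.mul_right _) (Dvd.dvd.mul_left dvd_rfl _)
      · have hm : substA a j (p * X i) = substA a j p * X i := by
          rw [map_mul, substA_X, if_neg hij]
        have : p * X i - substA a j (p * X i) = (p - substA a j p) * X i := by
          rw [hm]; ring
        rw [this]; exact hp.mul_right _

lemma prime_X_sub_C (j : Fin (m + 1)) :
    Prime (X j - C a : MvPolynomial (Fin (m + 1)) ℂ) := by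
  have h0 : Prime (X 0 - C a : MvPolynomial (Fin (m + 1)) ℂ) := by
    rw [← MulEquiv.prime_iff (finSuccEquiv ℂ m).toMulEquiv]
    have he : (finSuccEquiv ℂ m) (X 0 - C a) =
        Polynomial.X - Polynomial.C (C a) := by
      rw [map_sub, finSuccEquiv_X_zero]
      congr 1
      simp [finSuccEquiv_apply]
    show Prime ((finSuccEquiv ℂ m) (X 0 - C a))
    rw [he]
    exact Polynomial.prime_X_sub_C _
  have he : (renameEquiv ℂ (Equiv.swap (0 : Fin (m + 1)) j)) (X 0 - C a) =
      X j - C a := by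
    simp [Equiv.swap_apply_left]
  have := (MulEquiv.prime_iff (renameEquiv ℂ (Equiv.swap (0 : Fin (m + 1)) j)).toMulEquiv).mpr h0
  rw [show ((renameEquiv ℂ (Equiv.swap (0 : Fin (m + 1)) j)).toMulEquiv
      (X 0 - C a) : MvPolynomial (Fin (m + 1)) ℂ) =
      (renameEquiv ℂ (Equiv.swap (0 : Fin (m + 1)) j)) (X 0 - C a) from rfl, he] at this
  exact this

lemma not_dvd_X_sub_C {i j : Fin (m + 1)} (hij : i ≠ j) :
    ¬ (X j - C a : MvPolynomial (Fin (m + 1)) ℂ) ∣ (X i - C a) := by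
  intro hd
  have h2 := map_dvd (substA a j) hd
  rw [show substA a j (X j - C a) = 0 from by simp [substA],
    show substA a j (X i - C a) = X i - C a from by simp [substA, hij],
    zero_dvd_iff] at h2
  exact (prime_X_sub_C a i).ne_zero h2

lemma prod_dvd (f : MvPolynomial (Fin (m + 1)) ℂ)
    (hdvd : ∀ j, (X j - C a) ∣ f) (s : Finset (Fin (m + 1))) :
    (∏ j ∈ s, (X j - C a)) ∣ f := by
  classical
  induction s using Finset.induction_on with
  | empty => simp
  | insert j s hj ih =>
      obtain ⟨g, hg⟩ := ih
      have hpj := prime_X_sub_C a j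
      have hd : (X j - C a) ∣ (∏ i ∈ s, (X i - C a)) * g := hg ▸ hdvd j
      rcases hpj.dvd_or_dvd hd with h1 | h2
      · exfalso
        obtain ⟨i, hi, hdvd'⟩ := (hpj.dvd_finset_prod_iff _).mp h1
        exact not_dvd_X_sub_C a (by rintro rfl; exact hj hi) hdvd'
      · obtain ⟨h, hh⟩ := h2
        refine ⟨h, ?_⟩
        rw [Finset.prod_insert hj, hg, hh]; ring



variable {σ' : Type*}

lemma degree_eq_sum (d : σ' →₀ ℕ) : d.degree = d.sum fun _ e => e := rfl

lemma top_component_ne_zero {p : MvPolynomial σ' ℂ} (hp : p ≠ 0) :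
    homogeneousComponent p.totalDegree p ≠ 0 := by
  obtain ⟨d, hd, hsup⟩ := Finset.exists_mem_eq_sup p.support
    (support_nonempty.mpr hp) (fun s => s.sum fun _ e => e)
  intro h0
  have h1 : coeff d (homogeneousComponent p.totalDegree p) = coeff d p := by
    rw [coeff_homogeneousComponent, if_pos (by rw [degree_eq_sum, totalDegree, hsup])]
  rw [h0, coeff_zero] at h1
  exact (mem_support_iff.mp hd) h1.symm

lemma lower_part {p : MvPolynomial σ' ℂ} {n : ℕ} (h : p.totalDegree ≤ n) :
    p - homogeneousComponent n p = 0 ∨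
      (p - homogeneousComponent n p).totalDegree < n := by
  by_cases h0 : p - homogeneousComponent n p = 0
  · exact Or.inl h0
  right
  have key : ∀ d ∈ (p - homogeneousComponent n p).support,
      (d.sum fun _ e => e) < n := by
    intro d hd
    have hc : coeff d (p - homogeneousComponent n p) ≠ 0 := mem_support_iff.mp hd
    rw [coeff_sub, coeff_homogeneousComponent] at hc
    by_cases hdn : d.degree = n
    · rw [if_pos hdn, sub_self] at hc; exact absurd rfl hc
    · rw [if_neg hdn, sub_zero] at hc
      rw [← degree_eq_sum]
      exact lt_of_le_of_ne
        (by rw [degree_eq_sum]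
            exact le_trans (le_totalDegree (mem_support_iff.mpr hc)) h) hdn
  rcases Nat.eq_zero_or_pos n with rfl | hn
  · exfalso
    apply h0
    rw [← support_eq_empty, Finset.eq_empty_iff_forall_notMem]
    intro d hd
    exact Nat.not_lt_zero _ (key d hd)
  · rw [totalDegree]
    exact Finset.sup_lt_iff hn |>.mpr key

lemma totalDegree_mul_ge (p q : MvPolynomial σ' ℂ) (hp : p ≠ 0) (hq : q ≠ 0) :
    p.totalDegree + q.totalDegree ≤ (p * q).totalDegree := by
  obtain ⟨dp, dq, P1, Q1, hdp, hdq, hP1, hQ1⟩ :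
      ∃ (dp dq : ℕ) (P1 Q1 : MvPolynomial σ' ℂ), dp = p.totalDegree ∧
        dq = q.totalDegree ∧ P1 = homogeneousComponent dp p ∧
        Q1 = homogeneousComponent dq q :=
    ⟨_, _, _, _, rfl, rfl, rfl, rfl⟩
  have hP1h : P1.IsHomogeneous dp := hP1 ▸ homogeneousComponent_isHomogeneous dp p
  have hQ1h : Q1.IsHomogeneous dq := hQ1 ▸ homogeneousComponent_isHomogeneous dq q
  have hP1n : P1 ≠ 0 := by rw [hP1, hdp]; exact top_component_ne_zero hp
  have hQ1n : Q1 ≠ 0 := by rw [hQ1, hdq]; exact top_component_ne_zero hq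
  have hzero : ∀ (r s : MvPolynomial σ' ℂ), r.totalDegree + s.totalDegree < dp + dq →
      homogeneousComponent (dp + dq) (r * s) = 0 := fun r s hrs =>
    homogeneousComponent_eq_zero _ _ (lt_of_le_of_lt (totalDegree_mul r s) hrs)
  have hPdeg : p - P1 = 0 ∨ (p - P1).totalDegree < dp := by
    rw [hP1, hdp]; exact lower_part le_rfl
  have hQdeg : q - Q1 = 0 ∨ (q - Q1).totalDegree < dq := by
    rw [hQ1, hdq]; exact lower_part le_rfl
  have hcomp : homogeneousComponent (dp + dq) (p * q) = P1 * Q1 := by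
    have hsplit : p * q = P1 * Q1 + ((p - P1) * Q1 + P1 * (q - Q1)
        + (p - P1) * (q - Q1)) := by ring
    have hPQ : homogeneousComponent (dp + dq) (P1 * Q1) = P1 * Q1 := by
      rw [homogeneousComponent_of_mem (mem_homogeneousSubmodule _ _ |>.mpr
        (hP1h.mul hQ1h)), if_pos rfl]
    have h1 : homogeneousComponent (dp + dq) ((p - P1) * Q1) = 0 := by
      rcases hPdeg with he | hlt
      · rw [he, zero_mul, map_zero]
      · exact hzero _ _ (by have := hQ1h.totalDegree hQ1n; omega)
    have h2 : homogeneousComponent (dp + dq) (P1 * (q - Q1)) = 0 := by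
      rcases hQdeg with he | hlt
      · rw [he, mul_zero, map_zero]
      · exact hzero _ _ (by have := hP1h.totalDegree hP1n; omega)
    have h3 : homogeneousComponent (dp + dq) ((p - P1) * (q - Q1)) = 0 := by
      rcases hPdeg with he | hlt
      · rw [he, zero_mul, map_zero]
      rcases hQdeg with he' | hlt'
      · rw [he', mul_zero, map_zero]
      · exact hzero _ _ (by omega)
    rw [hsplit, map_add, map_add, map_add, hPQ, h1, h2, h3, add_zero, add_zero,
      add_zero]
  have hne : homogeneousComponent (dp + dq) (p * q) ≠ 0 := by
    rw [hcomp]; exact mul_ne_zero hP1n hQ1n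
  by_contra hlt
  exact hne (homogeneousComponent_eq_zero _ _ (by omega))


lemma one_le_prod_totalDegree (s : Finset (Fin (m + 1))) :
    s.card ≤ (∏ j ∈ s, (X j - C a : MvPolynomial (Fin (m + 1)) ℂ)).totalDegree := by
  classical
  induction s using Finset.induction_on with
  | empty => simp
  | insert j s hj ih =>
      rw [Finset.prod_insert hj, Finset.card_insert_of_notMem hj]
      have hmem : Finsupp.single j 1 ∈
          (X j - C a : MvPolynomial (Fin (m + 1)) ℂ).support := by
        rw [mem_support_iff, coeff_sub,
          show coeff (Finsupp.single j 1) (X j : MvPolynomial (Fin (m + 1)) ℂ) = 1 from by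
            simp [coeff_X],
          show coeff (Finsupp.single j 1) (C a : MvPolynomial (Fin (m + 1)) ℂ) = 0 from by
            rw [coeff_C]
            simp [Finsupp.single_eq_zero, eq_comm]]
        simp
      have h1 : 1 ≤ (X j - C a : MvPolynomial (Fin (m + 1)) ℂ).totalDegree := by
        have := le_totalDegree hmem
        simpa using this
      have hnz : (∏ i ∈ s, (X i - C a : MvPolynomial (Fin (m + 1)) ℂ)) ≠ 0 :=
        Finset.prod_ne_zero_iff.mpr fun i _ => (prime_X_sub_C a i).ne_zero
      have := totalDegree_mul_ge (X j - C a) (∏ i ∈ s, (X i - C a))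
        (prime_X_sub_C a j).ne_zero hnz
      -- goal : s.card + 1 ≤ totalDegree ((X j - C a) * ∏ ...)
      have hsum : Finsupp.sum (Finsupp.single j 1) (fun _ e => e) = 1 := by simp
      omega

end SymmAux

/-- A symmetric polynomial in `n ≥ 1` variables over `ℂ` of total degree at most `n`
which vanishes upon substituting `a ∈ ℂ` for the last variable is a constant
multiple of `∏ j (x j - a)`. -/
theorem symm_poly_const_multiple_of_product
    (n : ℕ) (hn : 1 ≤ n) (a : ℂ)
    (f : MvPolynomial (Fin n) ℂ)
    (hf_sym : ∀ σ : Equiv.Perm (Fin n), rename σ f = f)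
    (hf_deg : f.totalDegree ≤ n)
    (h : aeval (fun i : Fin n => if h : (i : ℕ) < n - 1
          then (X ⟨(i : ℕ), h⟩ : MvPolynomial (Fin (n - 1)) ℂ) else C a) f = 0) :
    ∃ c : ℂ, f = C c * ∏ j : Fin n, (X j - C a) := by
  classical
  obtain ⟨m, rfl⟩ : ∃ m, n = m + 1 := ⟨n - 1, (Nat.succ_pred_eq_of_pos hn).symm⟩
  open SymmAux in
  -- the substitution of `a` into the last variable kills `f`
  have hlast : substA a (Fin.last m) f = 0 := by
    have hre : substA a (Fin.last m) f =
        rename (fun i : Fin (m + 1 - 1) => (⟨i.val, by omega⟩ : Fin (m + 1)))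
          (aeval (fun i : Fin (m + 1) => if h : (i : ℕ) < m + 1 - 1
            then (X ⟨(i : ℕ), h⟩ : MvPolynomial (Fin (m + 1 - 1)) ℂ) else C a) f) := by
      have hcomp := comp_aeval
        (φ := rename (fun i : Fin (m + 1 - 1) => (⟨i.val, by omega⟩ : Fin (m + 1))))
        (f := fun i : Fin (m + 1) => if h : (i : ℕ) < m + 1 - 1
            then (X ⟨(i : ℕ), h⟩ : MvPolynomial (Fin (m + 1 - 1)) ℂ) else C a)
      have hfuneq : (fun i : Fin (m + 1) =>
          if i = Fin.last m then (C a : MvPolynomial (Fin (m + 1)) ℂ) else X i) =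
          fun i : Fin (m + 1) =>
            rename (fun i : Fin (m + 1 - 1) => (⟨i.val, by omega⟩ : Fin (m + 1)))
              (if h : (i : ℕ) < m + 1 - 1
                then (X ⟨(i : ℕ), h⟩ : MvPolynomial (Fin (m + 1 - 1)) ℂ) else C a) := by
        funext i
        by_cases hi : (i : ℕ) < m + 1 - 1
        · rw [dif_pos hi, rename_X, if_neg (by
            intro hEq; rw [hEq] at hi; simp [Fin.val_last] at hi)]
        · rw [dif_neg hi, rename_C, if_pos (by
            have := i.isLt
            exact Fin.ext (by simp [Fin.val_last]; omega))]
      rw [substA, hfuneq, ← hcomp]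
      rfl
    rw [hre, h, map_zero]
  -- substituting `a` into any variable kills `f`
  have hsubst : ∀ j : Fin (m + 1), substA a j f = 0 := by
    intro j
    have key : substA a j f =
        rename (Equiv.swap j (Fin.last m)) (substA a (Fin.last m) f) := by
      conv_lhs => rw [← hf_sym (Equiv.swap j (Fin.last m))]
      rw [substA, aeval_rename, substA]
      have hcomp := comp_aeval
        (φ := rename (⇑(Equiv.swap j (Fin.last m))))
        (f := fun i : Fin (m + 1) =>
          if i = Fin.last m then (C a : MvPolynomial (Fin (m + 1)) ℂ) else X i)
      have hfuneq : ((fun i : Fin (m + 1) =>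
            if i = j then (C a : MvPolynomial (Fin (m + 1)) ℂ) else X i) ∘
            ⇑(Equiv.swap j (Fin.last m))) =
          fun i : Fin (m + 1) => rename (⇑(Equiv.swap j (Fin.last m)))
            (if i = Fin.last m then (C a : MvPolynomial (Fin (m + 1)) ℂ) else X i) := by
        funext i
        simp only [Function.comp_apply]
        by_cases hi : i = Fin.last m
        · rw [if_pos hi, if_pos (by rw [hi, Equiv.swap_apply_right]), rename_C]
        · rw [if_neg hi, if_neg (by
            intro hEq
            have : i = Fin.last m := by
              have := (Equiv.apply_eq_iff_eq_symm_apply _).mp hEq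
              rwa [Equiv.symm_swap, Equiv.swap_apply_left] at this
            exact hi this), rename_X]
      rw [hfuneq, ← hcomp]
      rfl
    rw [key, hlast, map_zero]
  have hdvd : ∀ j : Fin (m + 1), (X j - C a) ∣ f := by
    intro j
    have := dvd_sub_substA a j f
    rwa [hsubst j, sub_zero] at this
  obtain ⟨g, hg⟩ := prod_dvd a f hdvd Finset.univ
  by_cases hg0 : g = 0
  · exact ⟨0, by rw [hg, hg0, mul_zero, map_zero, zero_mul]⟩
  · have hPne : (∏ j : Fin (m + 1), (X j - C a : MvPolynomial (Fin (m + 1)) ℂ)) ≠ 0 :=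
      Finset.prod_ne_zero_iff.mpr fun i _ => (prime_X_sub_C a i).ne_zero
    have hmul := totalDegree_mul_ge _ g hPne hg0
    have hP := one_le_prod_totalDegree a (Finset.univ : Finset (Fin (m + 1)))
    rw [Finset.card_univ, Fintype.card_fin] at hP
    rw [hg] at hf_deg
    have hdeg0 : g.totalDegree = 0 := by omega
    have hgc : g = C (coeff 0 g) := by
      ext d
      rcases eq_or_ne d 0 with rfl | hd
      · simp [coeff_C]
      · rw [coeff_C, if_neg (by exact fun hEq => hd (by simpa using hEq.symm))]
        by_contra hc
        have hmem : d ∈ g.support := mem_support_iff.mpr hc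
        have hle := le_totalDegree hmem
        rw [hdeg0, Nat.le_zero] at hle
        exact hd ((Finsupp.degree_eq_zero_iff d).mp (by rw [degree_eq_sum]; exact hle))
    refine ⟨coeff 0 g, ?_⟩
    conv_lhs => rw [hg, hgc]
    ring
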